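/- Let n ≥ 3 and f(z) = Σ_{j=1}^{n} zⱼ² + 1. Then 𝓘(f) = {y ∈ ℝⁿ : Σ_{j=1}^{n} yⱼ² ≥ 1}. -/

import Mathlib

theorem imagProj_sphere_plus_one (n : ℕ) :
    {y : Fin (n + 3) → ℝ | ∃ z : Fin (n + 3) → ℂ,
        (∑ j, z j ^ 2) + 1 = 0 ∧ (fun j => (z j).im) = y}
      = {y : Fin (n + 3) → ℝ | 1 ≤ ∑ j, y j ^ 2} := by
  ext y
  simp only [Set.mem_setOf_eq]
  constructor
  · rintro ⟨z, hz, rfl⟩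
    have hre := congrArg Complex.re hz
    simp only [Complex.add_re, Complex.re_sum, Complex.one_re, Complex.zero_re, pow_two,
      Complex.mul_re, Finset.sum_sub_distrib] at hre
    have h0 : (0:ℝ) ≤ ∑ j, (z j).re * (z j).re :=
      Finset.sum_nonneg fun j _ => mul_self_nonneg _
    simp only [pow_two]
    linarith
  · intro hy
    have hy0 : y ≠ 0 := by
      intro h; simp [h] at hy; linarith
    let v : EuclideanSpace ℝ (Fin (n + 3)) := WithLp.toLp 2 y
    have hv : v ≠ 0 := by
      intro h; apply hy0; simpa [v] using congrArg WithLp.ofLp h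
    have hbot : (ℝ ∙ v)ᗮ ≠ ⊥ := by
      intro h
      have htop : (ℝ ∙ v) = ⊤ := Submodule.orthogonal_eq_bot_iff.mp h
      have h1 : Module.finrank ℝ (ℝ ∙ v) = 1 := finrank_span_singleton hv
      rw [htop, finrank_top] at h1
      have : Module.finrank ℝ (EuclideanSpace ℝ (Fin (n + 3))) = n + 3 :=
        finrank_euclideanSpace_fin
      omega
    obtain ⟨w, hwmem, hw0⟩ := Submodule.exists_mem_ne_zero_of_ne_bot hbot
    have hwv : (inner ℝ v w : ℝ) = 0 :=
      (Submodule.mem_orthogonal _ _).mp hwmem v (Submodule.mem_span_singleton_self v)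
    have hdot : ∑ j, y j * w j = 0 := by
      simpa [v, PiLp.inner_apply, RCLike.inner_apply, mul_comm] using hwv
    obtain ⟨j0, hj0⟩ : ∃ j, w j ≠ 0 := by
      by_contra h
      push_neg at h
      exact hw0 (by ext j; simpa using h j)
    have hs : 0 < ∑ j, w j ^ 2 :=
      Finset.sum_pos' (fun j _ => sq_nonneg _) ⟨j0, Finset.mem_univ _, by positivity⟩
    set s : ℝ := ∑ j, w j ^ 2 with hsdef
    set t : ℝ := Real.sqrt ((∑ j, y j ^ 2 - 1) / s) with htdef
    have ht2 : t ^ 2 = (∑ j, y j ^ 2 - 1) / s :=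
      Real.sq_sqrt (div_nonneg (by linarith) hs.le)
    refine ⟨fun j => ⟨t * w j, y j⟩, ?_, rfl⟩
    apply Complex.ext
    · simp only [Complex.add_re, Complex.re_sum, Complex.one_re, Complex.zero_re, pow_two,
        Complex.mul_re, Finset.sum_sub_distrib]
      have h1 : ∑ j, (t * w j) * (t * w j) = t ^ 2 * s := by
        rw [hsdef, Finset.mul_sum]; congr 1; ext j; ring
      have h2 : ∑ j, (y j : ℝ) * y j = ∑ j, y j ^ 2 := by
        congr 1; ext j; ring
      rw [h1, h2, ht2, div_mul_cancel₀ _ hs.ne']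
      ring
    · simp only [Complex.add_im, Complex.im_sum, Complex.one_im, Complex.zero_im, pow_two,
        Complex.mul_im]
      have h1 : ∑ j, ((t * w j) * y j + y j * (t * w j)) = 2 * t * ∑ j, y j * w j := by
        rw [Finset.mul_sum]; congr 1; ext j; ring
      rw [h1, hdot]
      ring
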